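/- Let μ = (μ₁, μ₂, μ₃) be complex numbers with μ₁ + μ₂ + μ₃ = 0, set ν₁ = (μ₁−μ₂)/3, ν₂ = (μ₂−μ₃)/3, ν₃ = (μ₃−μ₁)/3, and define S^{−−}(s, μ) = (1/(32π²)) · cos((3/2)πν₃) sin(π(s₁−μ₂)) sin(π(s₂+μ₂)) / (sin((3/2)πν₂) sin((3/2)πν₁)). Let w₄, w₅ act on μ by the cyclic permutations w₄(μ) = (μ₃, μ₁, μ₂) and w₅(μ) = (μ₂, μ₃, μ₁). Then for all s = (s₁, s₂) for which all terms are defined: 32π² ∑_{w ∈ {I, w₄, w₅}} S^{−−}(s, w(μ)) = (1/3) ∑_{w ∈ {I, w₄, w₅}} [ 4 cos(π(s₁ + w(μ)₂/2)) cos(π(s₂ − w(μ)₂/2)) + 2 sin(π(s₁ + w(μ)₂/2)) sin(π(s₂ − w(μ)₂/2)) ], where w(μ)₂ denotes the second coordinate of w(μ). -/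

import Mathlib

set_option maxHeartbeats 2000000
set_option linter.unnecessarySeqFocus false


open Complex

noncomputable def Smm (s₁ s₂ μ₁ μ₂ μ₃ : ℂ) : ℂ :=
  (1 / (32 * (Real.pi : ℂ) ^ 2)) *
    (Complex.cos ((3 / 2) * (Real.pi : ℂ) * ((μ₃ - μ₁) / 3)) *
      Complex.sin ((Real.pi : ℂ) * (s₁ - μ₂)) * Complex.sin ((Real.pi : ℂ) * (s₂ + μ₂))) /
    (Complex.sin ((3 / 2) * (Real.pi : ℂ) * ((μ₂ - μ₃) / 3)) *
      Complex.sin ((3 / 2) * (Real.pi : ℂ) * ((μ₁ - μ₂) / 3)))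

theorem trig_identity_minus_minus (s₁ s₂ μ₁ μ₂ μ₃ : ℂ) (hμ : μ₁ + μ₂ + μ₃ = 0)
    (h1 : Complex.sin ((3 / 2) * (Real.pi : ℂ) * ((μ₁ - μ₂) / 3)) ≠ 0)
    (h2 : Complex.sin ((3 / 2) * (Real.pi : ℂ) * ((μ₂ - μ₃) / 3)) ≠ 0)
    (h3 : Complex.sin ((3 / 2) * (Real.pi : ℂ) * ((μ₃ - μ₁) / 3)) ≠ 0) :
    32 * (Real.pi : ℂ) ^ 2 *
        (Smm s₁ s₂ μ₁ μ₂ μ₃ + Smm s₁ s₂ μ₃ μ₁ μ₂ + Smm s₁ s₂ μ₂ μ₃ μ₁)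
      = (1 / 3) *
        ((4 * Complex.cos ((Real.pi : ℂ) * (s₁ + μ₂ / 2)) *
            Complex.cos ((Real.pi : ℂ) * (s₂ - μ₂ / 2)) +
          2 * Complex.sin ((Real.pi : ℂ) * (s₁ + μ₂ / 2)) *
            Complex.sin ((Real.pi : ℂ) * (s₂ - μ₂ / 2))) +
        (4 * Complex.cos ((Real.pi : ℂ) * (s₁ + μ₁ / 2)) *
            Complex.cos ((Real.pi : ℂ) * (s₂ - μ₁ / 2)) +
          2 * Complex.sin ((Real.pi : ℂ) * (s₁ + μ₁ / 2)) *
            Complex.sin ((Real.pi : ℂ) * (s₂ - μ₁ / 2))) +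
        (4 * Complex.cos ((Real.pi : ℂ) * (s₁ + μ₃ / 2)) *
            Complex.cos ((Real.pi : ℂ) * (s₂ - μ₃ / 2)) +
          2 * Complex.sin ((Real.pi : ℂ) * (s₁ + μ₃ / 2)) *
            Complex.sin ((Real.pi : ℂ) * (s₂ - μ₃ / 2)))) := by
  have sin_eq : ∀ t : ℂ, Complex.sin t
      = ((Complex.exp (t * I))⁻¹ - Complex.exp (t * I)) * I / 2 := by
    intro t
    rw [Complex.sin, show -t * I = -(t * I) from by ring, Complex.exp_neg]
  have cos_eq : ∀ t : ℂ, Complex.cos t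
      = (Complex.exp (t * I) + (Complex.exp (t * I))⁻¹) / 2 := by
    intro t
    rw [Complex.cos, show -t * I = -(t * I) from by ring, Complex.exp_neg]
  have g1 : Complex.exp (3 / 2 * (Real.pi : ℂ) * ((μ₃ - μ₁) / 3) * I) = ((Complex.exp ((Real.pi : ℂ) * (μ₁ / 2) * I)) ^ 2 * (Complex.exp ((Real.pi : ℂ) * (μ₂ / 2) * I)))⁻¹ := by
    rw [show 3 / 2 * (Real.pi : ℂ) * ((μ₃ - μ₁) / 3) * I = -((Real.pi : ℂ) * (μ₁ / 2) * I) + -((Real.pi : ℂ) * (μ₁ / 2) * I) + -((Real.pi : ℂ) * (μ₂ / 2) * I) from by linear_combination ((Real.pi : ℂ) * I / 2) * hμ]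
    simp only [Complex.exp_add, Complex.exp_neg]
    try ring
  have g2 : Complex.exp ((Real.pi : ℂ) * (s₁ - μ₂) * I) = (Complex.exp ((Real.pi : ℂ) * s₁ * I)) * ((Complex.exp ((Real.pi : ℂ) * (μ₂ / 2) * I)) ^ 2)⁻¹ := by
    rw [show (Real.pi : ℂ) * (s₁ - μ₂) * I = ((Real.pi : ℂ) * s₁ * I) + -((Real.pi : ℂ) * (μ₂ / 2) * I) + -((Real.pi : ℂ) * (μ₂ / 2) * I) from by ring]
    simp only [Complex.exp_add, Complex.exp_neg]
    try ring
  have g3 : Complex.exp ((Real.pi : ℂ) * (s₂ + μ₂) * I) = (Complex.exp ((Real.pi : ℂ) * s₂ * I)) * (Complex.exp ((Real.pi : ℂ) * (μ₂ / 2) * I)) ^ 2 := by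
    rw [show (Real.pi : ℂ) * (s₂ + μ₂) * I = ((Real.pi : ℂ) * s₂ * I) + ((Real.pi : ℂ) * (μ₂ / 2) * I) + ((Real.pi : ℂ) * (μ₂ / 2) * I) from by ring]
    simp only [Complex.exp_add, Complex.exp_neg]
    try ring
  have g4 : Complex.exp (3 / 2 * (Real.pi : ℂ) * ((μ₂ - μ₃) / 3) * I) = (Complex.exp ((Real.pi : ℂ) * (μ₁ / 2) * I)) * (Complex.exp ((Real.pi : ℂ) * (μ₂ / 2) * I)) ^ 2 := by
    rw [show 3 / 2 * (Real.pi : ℂ) * ((μ₂ - μ₃) / 3) * I = ((Real.pi : ℂ) * (μ₁ / 2) * I) + ((Real.pi : ℂ) * (μ₂ / 2) * I) + ((Real.pi : ℂ) * (μ₂ / 2) * I) from by linear_combination (-((Real.pi : ℂ) * I / 2)) * hμ]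
    simp only [Complex.exp_add, Complex.exp_neg]
    try ring
  have g5 : Complex.exp (3 / 2 * (Real.pi : ℂ) * ((μ₁ - μ₂) / 3) * I) = (Complex.exp ((Real.pi : ℂ) * (μ₁ / 2) * I)) * (Complex.exp ((Real.pi : ℂ) * (μ₂ / 2) * I))⁻¹ := by
    rw [show 3 / 2 * (Real.pi : ℂ) * ((μ₁ - μ₂) / 3) * I = ((Real.pi : ℂ) * (μ₁ / 2) * I) + -((Real.pi : ℂ) * (μ₂ / 2) * I) from by ring]
    simp only [Complex.exp_add, Complex.exp_neg]
    try ring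
  have g6 : Complex.exp ((Real.pi : ℂ) * (s₁ - μ₁) * I) = (Complex.exp ((Real.pi : ℂ) * s₁ * I)) * ((Complex.exp ((Real.pi : ℂ) * (μ₁ / 2) * I)) ^ 2)⁻¹ := by
    rw [show (Real.pi : ℂ) * (s₁ - μ₁) * I = ((Real.pi : ℂ) * s₁ * I) + -((Real.pi : ℂ) * (μ₁ / 2) * I) + -((Real.pi : ℂ) * (μ₁ / 2) * I) from by ring]
    simp only [Complex.exp_add, Complex.exp_neg]
    try ring
  have g7 : Complex.exp ((Real.pi : ℂ) * (s₂ + μ₁) * I) = (Complex.exp ((Real.pi : ℂ) * s₂ * I)) * (Complex.exp ((Real.pi : ℂ) * (μ₁ / 2) * I)) ^ 2 := by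
    rw [show (Real.pi : ℂ) * (s₂ + μ₁) * I = ((Real.pi : ℂ) * s₂ * I) + ((Real.pi : ℂ) * (μ₁ / 2) * I) + ((Real.pi : ℂ) * (μ₁ / 2) * I) from by ring]
    simp only [Complex.exp_add, Complex.exp_neg]
    try ring
  have g8 : Complex.exp ((Real.pi : ℂ) * (s₁ - μ₃) * I) = (Complex.exp ((Real.pi : ℂ) * s₁ * I)) * (Complex.exp ((Real.pi : ℂ) * (μ₁ / 2) * I)) ^ 2 * (Complex.exp ((Real.pi : ℂ) * (μ₂ / 2) * I)) ^ 2 := by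
    rw [show (Real.pi : ℂ) * (s₁ - μ₃) * I = ((Real.pi : ℂ) * s₁ * I) + ((Real.pi : ℂ) * (μ₁ / 2) * I) + ((Real.pi : ℂ) * (μ₁ / 2) * I) + ((Real.pi : ℂ) * (μ₂ / 2) * I) + ((Real.pi : ℂ) * (μ₂ / 2) * I) from by linear_combination (-((Real.pi : ℂ) * I)) * hμ]
    simp only [Complex.exp_add, Complex.exp_neg]
    try ring
  have g9 : Complex.exp ((Real.pi : ℂ) * (s₂ + μ₃) * I) = (Complex.exp ((Real.pi : ℂ) * s₂ * I)) * ((Complex.exp ((Real.pi : ℂ) * (μ₁ / 2) * I)) ^ 2 * (Complex.exp ((Real.pi : ℂ) * (μ₂ / 2) * I)) ^ 2)⁻¹ := by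
    rw [show (Real.pi : ℂ) * (s₂ + μ₃) * I = ((Real.pi : ℂ) * s₂ * I) + -((Real.pi : ℂ) * (μ₁ / 2) * I) + -((Real.pi : ℂ) * (μ₁ / 2) * I) + -((Real.pi : ℂ) * (μ₂ / 2) * I) + -((Real.pi : ℂ) * (μ₂ / 2) * I) from by linear_combination ((Real.pi : ℂ) * I) * hμ]
    simp only [Complex.exp_add, Complex.exp_neg]
    try ring
  have g10 : Complex.exp ((Real.pi : ℂ) * (s₁ + μ₂ / 2) * I) = (Complex.exp ((Real.pi : ℂ) * s₁ * I)) * (Complex.exp ((Real.pi : ℂ) * (μ₂ / 2) * I)) := by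
    rw [show (Real.pi : ℂ) * (s₁ + μ₂ / 2) * I = ((Real.pi : ℂ) * s₁ * I) + ((Real.pi : ℂ) * (μ₂ / 2) * I) from by ring]
    simp only [Complex.exp_add, Complex.exp_neg]
    try ring
  have g11 : Complex.exp ((Real.pi : ℂ) * (s₂ - μ₂ / 2) * I) = (Complex.exp ((Real.pi : ℂ) * s₂ * I)) * (Complex.exp ((Real.pi : ℂ) * (μ₂ / 2) * I))⁻¹ := by
    rw [show (Real.pi : ℂ) * (s₂ - μ₂ / 2) * I = ((Real.pi : ℂ) * s₂ * I) + -((Real.pi : ℂ) * (μ₂ / 2) * I) from by ring]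
    simp only [Complex.exp_add, Complex.exp_neg]
    try ring
  have g12 : Complex.exp ((Real.pi : ℂ) * (s₁ + μ₁ / 2) * I) = (Complex.exp ((Real.pi : ℂ) * s₁ * I)) * (Complex.exp ((Real.pi : ℂ) * (μ₁ / 2) * I)) := by
    rw [show (Real.pi : ℂ) * (s₁ + μ₁ / 2) * I = ((Real.pi : ℂ) * s₁ * I) + ((Real.pi : ℂ) * (μ₁ / 2) * I) from by ring]
    simp only [Complex.exp_add, Complex.exp_neg]
    try ring
  have g13 : Complex.exp ((Real.pi : ℂ) * (s₂ - μ₁ / 2) * I) = (Complex.exp ((Real.pi : ℂ) * s₂ * I)) * (Complex.exp ((Real.pi : ℂ) * (μ₁ / 2) * I))⁻¹ := by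
    rw [show (Real.pi : ℂ) * (s₂ - μ₁ / 2) * I = ((Real.pi : ℂ) * s₂ * I) + -((Real.pi : ℂ) * (μ₁ / 2) * I) from by ring]
    simp only [Complex.exp_add, Complex.exp_neg]
    try ring
  have g14 : Complex.exp ((Real.pi : ℂ) * (s₁ + μ₃ / 2) * I) = (Complex.exp ((Real.pi : ℂ) * s₁ * I)) * ((Complex.exp ((Real.pi : ℂ) * (μ₁ / 2) * I)) * (Complex.exp ((Real.pi : ℂ) * (μ₂ / 2) * I)))⁻¹ := by
    rw [show (Real.pi : ℂ) * (s₁ + μ₃ / 2) * I = ((Real.pi : ℂ) * s₁ * I) + -((Real.pi : ℂ) * (μ₁ / 2) * I) + -((Real.pi : ℂ) * (μ₂ / 2) * I) from by linear_combination ((Real.pi : ℂ) * I / 2) * hμ]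
    simp only [Complex.exp_add, Complex.exp_neg]
    try ring
  have g15 : Complex.exp ((Real.pi : ℂ) * (s₂ - μ₃ / 2) * I) = (Complex.exp ((Real.pi : ℂ) * s₂ * I)) * (Complex.exp ((Real.pi : ℂ) * (μ₁ / 2) * I)) * (Complex.exp ((Real.pi : ℂ) * (μ₂ / 2) * I)) := by
    rw [show (Real.pi : ℂ) * (s₂ - μ₃ / 2) * I = ((Real.pi : ℂ) * s₂ * I) + ((Real.pi : ℂ) * (μ₁ / 2) * I) + ((Real.pi : ℂ) * (μ₂ / 2) * I) from by linear_combination (-((Real.pi : ℂ) * I / 2)) * hμ]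
    simp only [Complex.exp_add, Complex.exp_neg]
    try ring
  rw [sin_eq, g5] at h1
  rw [sin_eq, g4] at h2
  rw [sin_eq, g1] at h3
  have hπ : (Real.pi : ℂ) ≠ 0 := by
    exact_mod_cast Real.pi_ne_zero
  have hI2 : (I : ℂ) ^ 2 = -1 := Complex.I_sq
  have k1 : ∀ u : ℂ, u ≠ 0 → (u⁻¹ - u) * I / 2 ≠ 0 → u ^ 2 ≠ 1 := by
    intro u hu h hsq
    apply h
    rw [show u⁻¹ - u = (1 - u ^ 2) * u⁻¹ from by field_simp, hsq]
    simp
  simp only [Smm, sin_eq, cos_eq, g1, g2, g3, g4, g5, g6, g7, g8, g9, g10, g11, g12, g13, g14, g15]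
  set a := Complex.exp ((Real.pi : ℂ) * s₁ * I) with hA
  set b := Complex.exp ((Real.pi : ℂ) * s₂ * I) with hB
  set x := Complex.exp ((Real.pi : ℂ) * (μ₁ / 2) * I) with hX
  set y := Complex.exp ((Real.pi : ℂ) * (μ₂ / 2) * I) with hY
  have ha : a ≠ 0 := hA ▸ Complex.exp_ne_zero _
  have hb : b ≠ 0 := hB ▸ Complex.exp_ne_zero _
  have hx : x ≠ 0 := hX ▸ Complex.exp_ne_zero _
  have hy : y ≠ 0 := hY ▸ Complex.exp_ne_zero _
  clear_value a b x y
  clear hA hB hX hY sin_eq cos_eq g1 g2 g3 g4 g5 g6 g7 g8 g9 g10 g11 g12 g13 g14 g15 hμ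
  have n1 : x * y⁻¹ - (x * y⁻¹)⁻¹ ≠ 0 := by
    intro hz
    apply h1
    rw [show (x * y⁻¹)⁻¹ - x * y⁻¹ = -(x * y⁻¹ - (x * y⁻¹)⁻¹) from by ring, hz]
    simp
  have n2 : x * y ^ 2 - (x * y ^ 2)⁻¹ ≠ 0 := by
    intro hz
    apply h2
    rw [show (x * y ^ 2)⁻¹ - x * y ^ 2 = -(x * y ^ 2 - (x * y ^ 2)⁻¹) from by ring, hz]
    simp
  have n3 : x ^ 2 * y - (x ^ 2 * y)⁻¹ ≠ 0 := by
    intro hz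
    apply h3
    rw [show (x ^ 2 * y)⁻¹⁻¹ - (x ^ 2 * y)⁻¹ = x ^ 2 * y - (x ^ 2 * y)⁻¹ from by
      rw [inv_inv], hz]
    simp
  clear h1 h2 h3 k1
  have pair : ∀ u v : ℂ, (u⁻¹ - u) * I / 2 * ((v⁻¹ - v) * I / 2)
      = -((u⁻¹ - u) * (v⁻¹ - v)) / 4 := by
    intro u v
    linear_combination ((u⁻¹ - u) * (v⁻¹ - v) / 4) * hI2
  have pair2 : ∀ c u v : ℂ, c * ((u⁻¹ - u) * I / 2) * ((v⁻¹ - v) * I / 2)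
      = -(c * (u⁻¹ - u) * (v⁻¹ - v)) / 4 := by
    intro c u v
    linear_combination (c * (u⁻¹ - u) * (v⁻¹ - v) / 4) * hI2
  simp only [pair2, pair, inv_inv]
  have q1 : x ^ 2 - y ^ 2 ≠ 0 := by
    intro hz
    apply n1
    rw [show x * y⁻¹ - (x * y⁻¹)⁻¹ = (x ^ 2 - y ^ 2) * (x * y)⁻¹ * (x * y⁻¹ * (x * y⁻¹)⁻¹) from by
      field_simp, hz]
    ring
  have q2 : x ^ 2 * y ^ 4 - 1 ≠ 0 := by
    intro hz
    apply n2
    rw [show x * y ^ 2 - (x * y ^ 2)⁻¹ = (x ^ 2 * y ^ 4 - 1) * (x * y ^ 2)⁻¹ from by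
      field_simp, hz]
    ring
  have q3 : x ^ 4 * y ^ 2 - 1 ≠ 0 := by
    intro hz
    apply n3
    rw [show x ^ 2 * y - (x ^ 2 * y)⁻¹ = (x ^ 4 * y ^ 2 - 1) * (x ^ 2 * y)⁻¹ from by
      field_simp, hz]
    ring
  field_simp [n1, n2, n3, q1, q2, q3, sub_ne_zero.mpr]
  have pairden : ∀ c d : ℂ, c * I * (d * I) = -(c * d) := by
    intro c d
    linear_combination (c * d) * hI2
  rw [hI2]
  have r1' : y ^ 2 - x ^ 2 ≠ 0 := fun hz => q1 (by linear_combination -hz)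
  have r2' : 1 - x ^ 2 * y ^ 4 ≠ 0 := fun hz => q2 (by linear_combination -hz)
  field_simp
  ring
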